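/- Let 𝔤 be a finite-dimensional Lie algebra, c ∈ Sym²(𝔤) invariant, and set δ = 0 and φ = −(1/6)[c₁₂, c₂₃] ∈ ∧³(𝔤). Then (δ, φ) is a quasi-Lie bialgebra structure on 𝔤; equivalently, d_CE φ = 0, where d_CE is the Chevalley–Eilenberg differential on ∧•(𝔤)-valued cochains (invariance of φ). -/
import Mathlib


/-!
STATEMENT 12: For a finite-dimensional Lie algebra `𝔤` and an invariant `c ∈ Sym²(𝔤)`,
the pair `δ = 0`, `φ = -(1/6)[c₁₂,c₂₃] ∈ ∧³(𝔤)` is a quasi-Lie bialgebra structure on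
`𝔤`; with `δ = 0` the conditions reduce to the invariance `d_CE φ = 0`, i.e.
`φ ∈ (∧³𝔤)^𝔤`.

In coordinates (basis `e_i`, structure constants `f`, `c = ∑ c i j • e_i ⊗ e_j`),
the commutator `[c₁₂, c₂₃]` computed in `U(𝔤)^{⊗3}` lands in `𝔤^{⊗3}` with components
`[c₁₂,c₂₃]^{ijl} = ∑ b b', c i b * f b b' j * c b' l`, so `φ` has the components
`phiOf` below; total antisymmetry and invariance are then the stated conclusions.
-/

open Finset

variable {k ι : Type*}

/-- Antisymmetry of structure constants. -/
def LieAntisymm [Field k] (f : ι → ι → ι → k) : Prop :=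
  ∀ i j l, f i j l = - f j i l

/-- Jacobi identity for structure constants. -/
def LieJacobi [Field k] [Fintype ι] (f : ι → ι → ι → k) : Prop :=
  ∀ i j l m, ∑ a, (f i j a * f a l m + f j l a * f a i m + f l i a * f a j m) = 0

/-- Components of the Chevalley–Eilenberg differential `(d_CE δ)(e_p, e_q)^{ij}` of a
`∧²𝔤`-valued 1-cochain `δ` (adjoint action coefficients), i.e.
`e_p·δ(e_q) - e_q·δ(e_p) - δ(⁅e_p,e_q⁆)`. -/
def dCEone [Field k] [Fintype ι] (f δ : ι → ι → ι → k) (p q i j : ι) : k :=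
  (∑ a, (f p a i * δ q a j + f p a j * δ q i a))
    - (∑ a, (f q a i * δ p a j + f q a j * δ p i a))
    - (∑ a, f p q a * δ a i j)

/-- Components of the Chevalley–Eilenberg differential `(d_CE λ)(e_p)^{ij} = (e_p·λ)^{ij}`
of a `∧²𝔤`-valued 0-cochain (bivector) `λ`. -/
def dCEtwo [Field k] [Fintype ι] (f : ι → ι → ι → k) (lam : ι → ι → k) (p i j : ι) : k :=
  ∑ a, (f p a i * lam a j + f p a j * lam i a)

/-- Components of the adjoint action `(e_p · φ)^{ijl}` of `𝔤` on a trivector `φ ∈ ∧³𝔤`;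
this is `(d_CE φ)(e_p)` for the 0-cochain `φ`. -/
def adActTri [Field k] [Fintype ι] (f : ι → ι → ι → k) (φ : ι → ι → ι → k)
    (p i j l : ι) : k :=
  ∑ a, (f p a i * φ a j l + f p a j * φ i a l + f p a l * φ i j a)

/-- Components of the co-Jacobiator `(1/2)[δ,δ](e_p)^{ijl}`: the cyclic sum of
`(δ ⊗ id) ∘ δ`. -/
def coJac [Field k] [Fintype ι] (δ : ι → ι → ι → k) (p i j l : ι) : k :=
  ∑ a, (δ p a l * δ a i j + δ p a i * δ a j l + δ p a j * δ a l i)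

/-- Components of the big bracket `[δ, λ]^{ijl}` of a cobracket `δ` with a bivector `λ`
(contraction of the `𝔤*`-leg of `δ` with one leg of `λ`, wedged). -/
def bigBr [Field k] [Fintype ι] (δ : ι → ι → ι → k) (lam : ι → ι → k) (i j l : ι) : k :=
  ∑ a, (lam a i * δ a j l + lam a j * δ a l i + lam a l * δ a i j)

/-- Components of `(1/2)⟦λ,λ⟧^{ijl}`, the (halved) algebraic Schouten bracket of the
bivector `λ` with itself. -/
def halfSch [Field k] [Fintype ι] (f : ι → ι → ι → k) (lam : ι → ι → k) (i j l : ι) : k :=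
  ∑ a, ∑ b, (lam a i * lam b j * f a b l + lam a j * lam b l * f a b i
      + lam a l * lam b i * f a b j)

/-- Components of the big bracket `[δ, φ]` of a cobracket with a trivector: the full
antisymmetrization (over `S₄`) of the contraction `∑ a, δ a i j * φ a l m`. -/
def bigBrTri [Field k] [Fintype ι] (δ φ : ι → ι → ι → k) (i j l m : ι) : k :=
  ∑ σ : Equiv.Perm (Fin 4),
    ((Equiv.Perm.sign σ : ℤ) : k) *
      ∑ a, δ a (![i, j, l, m] (σ 0)) (![i, j, l, m] (σ 1))
        * φ a (![i, j, l, m] (σ 2)) (![i, j, l, m] (σ 3))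

/-- A quasi-Lie bialgebra structure `(δ, φ)` on the Lie algebra with structure constants
`f`: `δ` and `φ` are antisymmetric, `d_CE δ = 0`, `(1/2)[δ,δ] + d_CE φ = 0` and
`[δ, φ] = 0`. -/
def IsQuasiLieBialgebra [Field k] [Fintype ι] (f δ φ : ι → ι → ι → k) : Prop :=
  (∀ p i j, δ p i j = - δ p j i) ∧
  (∀ i j l, φ i j l = - φ j i l) ∧ (∀ i j l, φ i j l = - φ i l j) ∧
  (∀ p q i j, dCEone f δ p q i j = 0) ∧
  (∀ p i j l, coJac δ p i j l + adActTri f φ p i j l = 0) ∧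
  (∀ i j l m, bigBrTri δ φ i j l m = 0)


/-- Invariance of `c ∈ 𝔤 ⊗ 𝔤` under the adjoint action: `e_p · c = 0` for all `p`. -/
def casimirInvariant [Field k] [Fintype ι] (f : ι → ι → ι → k) (c : ι → ι → k) : Prop :=
  ∀ p i j, ∑ a, (f p a i * c a j + f p a j * c i a) = 0

/-- Components of `φ = -(1/6)[c₁₂, c₂₃]`, the commutator computed in `U(𝔤)^{⊗3}`. -/
def phiOf [Field k] [Fintype ι] (f : ι → ι → ι → k) (c : ι → ι → k) (i j l : ι) : k :=
  -(1/6 : k) * ∑ b, ∑ b', c i b * f b b' j * c b' l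

section Aux

variable [Field k] [Fintype ι]

private lemma sum_comm23 {M : Type*} [AddCommMonoid M] (g : ι → ι → ι → M) :
    ∑ x, ∑ y, ∑ z, g x y z = ∑ x, ∑ z, ∑ y, g x y z :=
  Finset.sum_congr rfl fun _ _ => Finset.sum_comm

/-- The basic double sum `S i j l = ∑ c i b * f b b' j * c b' l`. -/
private def Sf (f : ι → ι → ι → k) (c : ι → ι → k) (i j l : ι) : k :=
  ∑ b, ∑ b', c i b * f b b' j * c b' l

variable {f : ι → ι → ι → k} {c : ι → ι → k}

private lemma inv' (hinv : casimirInvariant f c) (p i j : ι) :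
    ∑ a, f p a i * c a j = -∑ a, f p a j * c i a := by
  have h := hinv p i j
  rw [Finset.sum_add_distrib] at h
  exact eq_neg_of_add_eq_zero_left h

private lemma S_swap (hf₁ : LieAntisymm f) (hsymm : ∀ i j, c i j = c j i) (i j l : ι) :
    Sf f c i j l = -Sf f c l j i := by
  unfold Sf
  rw [show (-∑ b, ∑ b', c l b * f b b' j * c b' i)
      = ∑ b, ∑ b', -(c l b * f b b' j * c b' i) by simp [Finset.sum_neg_distrib]]
  rw [Finset.sum_comm]
  refine Finset.sum_congr rfl fun x _ => Finset.sum_congr rfl fun y _ => ?_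
  rw [hf₁ y x j, hsymm l x, hsymm y i]
  ring

private lemma S_cyc (hf₁ : LieAntisymm f) (hsymm : ∀ i j, c i j = c j i)
    (hinv : casimirInvariant f c) (i j l : ι) :
    Sf f c i j l = Sf f c j l i := by
  unfold Sf
  have h1 : ∀ b : ι, ∑ b', c i b * f b b' j * c b' l
      = c i b * ∑ b', f b b' j * c b' l := by
    intro b; rw [Finset.mul_sum]; exact Finset.sum_congr rfl fun _ _ => by ring
  calc ∑ b, ∑ b', c i b * f b b' j * c b' l
      = ∑ b, c i b * ∑ b', f b b' j * c b' l := Finset.sum_congr rfl fun b _ => h1 b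
    _ = ∑ b, c i b * -∑ a, f b a l * c j a := by
        refine Finset.sum_congr rfl fun b _ => by rw [inv' hinv b j l]
    _ = ∑ b, ∑ a, -(c i b * (f b a l * c j a)) := by
        refine Finset.sum_congr rfl fun b _ => ?_
        rw [mul_neg, Finset.mul_sum, ← Finset.sum_neg_distrib]
    _ = ∑ a, ∑ b, -(c i b * (f b a l * c j a)) := Finset.sum_comm
    _ = ∑ a, ∑ b, c j a * f a b l * c b i := by
        refine Finset.sum_congr rfl fun a _ => Finset.sum_congr rfl fun b _ => ?_
        rw [hf₁ b a l, hsymm b i]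
        ring

private lemma S_12 (hf₁ : LieAntisymm f) (hsymm : ∀ i j, c i j = c j i)
    (hinv : casimirInvariant f c) (i j l : ι) :
    Sf f c j i l = -Sf f c i j l := by
  rw [S_cyc hf₁ hsymm hinv j i l, S_swap hf₁ hsymm i l j, ← S_cyc hf₁ hsymm hinv i j l]

private lemma S_23 (hf₁ : LieAntisymm f) (hsymm : ∀ i j, c i j = c j i)
    (hinv : casimirInvariant f c) (i j l : ι) :
    Sf f c i l j = -Sf f c i j l := by
  rw [S_cyc hf₁ hsymm hinv i l j, S_swap hf₁ hsymm l j i]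

private lemma T1eq (hinv : casimirInvariant f c) (p i j l : ι) :
    ∑ a, f p a i * Sf f c a j l
      = ∑ x, ∑ y, ∑ b, c i x * c y l * -(f p x b * f b y j) := by
  unfold Sf
  calc ∑ a, f p a i * ∑ b, ∑ b', c a b * f b b' j * c b' l
      = ∑ a, ∑ b, ∑ b', f p a i * c a b * (f b b' j * c b' l) := by
        refine Finset.sum_congr rfl fun a _ => ?_
        rw [Finset.mul_sum]
        exact Finset.sum_congr rfl fun b _ => by
          rw [Finset.mul_sum]; exact Finset.sum_congr rfl fun b' _ => by ring
    _ = ∑ b, ∑ a, ∑ b', f p a i * c a b * (f b b' j * c b' l) := Finset.sum_comm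
    _ = ∑ b, ∑ b', ∑ a, f p a i * c a b * (f b b' j * c b' l) := sum_comm23 _
    _ = ∑ b, ∑ b', (∑ a, f p a i * c a b) * (f b b' j * c b' l) := by
        refine Finset.sum_congr rfl fun b _ => Finset.sum_congr rfl fun b' _ => ?_
        rw [Finset.sum_mul]
    _ = ∑ b, ∑ b', (-∑ a, f p a b * c i a) * (f b b' j * c b' l) := by
        refine Finset.sum_congr rfl fun b _ => Finset.sum_congr rfl fun b' _ => ?_
        rw [inv' hinv p i b]
    _ = ∑ b, ∑ b', ∑ a, c i a * c b' l * -(f p a b * f b b' j) := by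
        refine Finset.sum_congr rfl fun b _ => Finset.sum_congr rfl fun b' _ => ?_
        rw [neg_mul, Finset.sum_mul, ← Finset.sum_neg_distrib]
        exact Finset.sum_congr rfl fun a _ => by ring
    _ = ∑ b, ∑ a, ∑ b', c i a * c b' l * -(f p a b * f b b' j) := sum_comm23 _
    _ = ∑ a, ∑ b, ∑ b', c i a * c b' l * -(f p a b * f b b' j) := Finset.sum_comm
    _ = ∑ a, ∑ b', ∑ b, c i a * c b' l * -(f p a b * f b b' j) := sum_comm23 _

private lemma T2eq (p i j l : ι) :
    ∑ a, f p a j * Sf f c i a l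
      = ∑ x, ∑ y, ∑ b, c i x * c y l * (f x y b * f p b j) := by
  unfold Sf
  calc ∑ a, f p a j * ∑ b, ∑ b', c i b * f b b' a * c b' l
      = ∑ a, ∑ b, ∑ b', c i b * c b' l * (f b b' a * f p a j) := by
        refine Finset.sum_congr rfl fun a _ => ?_
        rw [Finset.mul_sum]
        exact Finset.sum_congr rfl fun b _ => by
          rw [Finset.mul_sum]; exact Finset.sum_congr rfl fun b' _ => by ring
    _ = ∑ b, ∑ a, ∑ b', c i b * c b' l * (f b b' a * f p a j) := Finset.sum_comm
    _ = ∑ b, ∑ b', ∑ a, c i b * c b' l * (f b b' a * f p a j) := sum_comm23 _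

private lemma T3eq (hsymm : ∀ i j, c i j = c j i) (hinv : casimirInvariant f c)
    (p i j l : ι) :
    ∑ a, f p a l * Sf f c i j a
      = ∑ x, ∑ y, ∑ b, c i x * c y l * -(f x b j * f p y b) := by
  unfold Sf
  calc ∑ a, f p a l * ∑ b, ∑ b', c i b * f b b' j * c b' a
      = ∑ a, ∑ b, ∑ b', c i b * f b b' j * (f p a l * c a b') := by
        refine Finset.sum_congr rfl fun a _ => ?_
        rw [Finset.mul_sum]
        exact Finset.sum_congr rfl fun b _ => by
          rw [Finset.mul_sum]
          exact Finset.sum_congr rfl fun b' _ => by rw [hsymm b' a]; ring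
    _ = ∑ b, ∑ a, ∑ b', c i b * f b b' j * (f p a l * c a b') := Finset.sum_comm
    _ = ∑ b, ∑ b', ∑ a, c i b * f b b' j * (f p a l * c a b') := sum_comm23 _
    _ = ∑ b, ∑ b', c i b * f b b' j * ∑ a, f p a l * c a b' := by
        refine Finset.sum_congr rfl fun b _ => Finset.sum_congr rfl fun b' _ => ?_
        rw [Finset.mul_sum]
    _ = ∑ b, ∑ b', c i b * f b b' j * -∑ a, f p a b' * c l a := by
        refine Finset.sum_congr rfl fun b _ => Finset.sum_congr rfl fun b' _ => ?_
        rw [inv' hinv p l b']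
    _ = ∑ b, ∑ b', ∑ a, c i b * c a l * -(f b b' j * f p a b') := by
        refine Finset.sum_congr rfl fun b _ => Finset.sum_congr rfl fun b' _ => ?_
        rw [mul_neg, Finset.mul_sum, ← Finset.sum_neg_distrib]
        exact Finset.sum_congr rfl fun a _ => by rw [hsymm l a]; ring
    _ = ∑ b, ∑ a, ∑ b', c i b * c a l * -(f b b' j * f p a b') := sum_comm23 _

private lemma K0 (hf₁ : LieAntisymm f) (hf₂ : LieJacobi f) (p x y j : ι) :
    ∑ b, (-(f p x b * f b y j) + f x y b * f p b j + -(f x b j * f p y b)) = 0 := by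
  rw [← hf₂ x p y j]
  refine Finset.sum_congr rfl fun b _ => ?_
  rw [hf₁ x p b, hf₁ b x j, hf₁ y x b, hf₁ b p j]
  ring

end Aux

/-- If `c ∈ Sym²(𝔤)` is invariant, then `δ = 0` together with
`φ = -(1/6)[c₁₂,c₂₃] ∈ ∧³(𝔤)` is a quasi-Lie bialgebra structure on `𝔤`
(equivalently, `φ` is antisymmetric and `d_CE φ = 0`). -/
theorem zero_cobracket_phiOf_isQuasiLieBialgebra [Field k] [CharZero k] [Fintype ι]
    [DecidableEq ι] (f : ι → ι → ι → k) (c : ι → ι → k)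
    (hf₁ : LieAntisymm f) (hf₂ : LieJacobi f)
    (hsymm : ∀ i j, c i j = c j i) (hinv : casimirInvariant f c) :
    IsQuasiLieBialgebra f (fun _ _ _ => (0 : k)) (phiOf f c) := by
  have hphi : ∀ i j l, phiOf f c i j l = -(1/6 : k) * Sf f c i j l := fun _ _ _ => rfl
  refine ⟨fun p i j => by simp, ?_, ?_, ?_, ?_, ?_⟩
  · intro i j l
    rw [hphi, hphi, S_12 hf₁ hsymm hinv i j l]
    ring
  · intro i j l
    rw [hphi, hphi, S_23 hf₁ hsymm hinv i j l]
    ring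
  · intro p q i j
    simp [dCEone]
  · intro p i j l
    have hco : coJac (fun _ _ _ => (0 : k)) p i j l = 0 := by simp [coJac]
    rw [hco, zero_add]
    have h1 : adActTri f (phiOf f c) p i j l
        = -(1/6 : k) * ((∑ a, f p a i * Sf f c a j l)
            + (∑ a, f p a j * Sf f c i a l) + (∑ a, f p a l * Sf f c i j a)) := by
      unfold adActTri
      rw [← Finset.sum_add_distrib, ← Finset.sum_add_distrib, Finset.mul_sum]
      refine Finset.sum_congr rfl fun a _ => ?_
      rw [hphi, hphi, hphi]
      ring
    rw [h1, T1eq hinv, T2eq, T3eq hsymm hinv]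
    have hxy : ∀ x y : ι,
        (∑ b, c i x * c y l * -(f p x b * f b y j))
          + (∑ b, c i x * c y l * (f x y b * f p b j))
          + (∑ b, c i x * c y l * -(f x b j * f p y b)) = 0 := by
      intro x y
      rw [← Finset.sum_add_distrib, ← Finset.sum_add_distrib]
      have : ∀ b : ι, c i x * c y l * -(f p x b * f b y j)
            + c i x * c y l * (f x y b * f p b j)
            + c i x * c y l * -(f x b j * f p y b)
          = c i x * c y l * (-(f p x b * f b y j) + f x y b * f p b j
              + -(f x b j * f p y b)) := fun b => by ring
      rw [Finset.sum_congr rfl fun b _ => this b, ← Finset.mul_sum,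
        K0 hf₁ hf₂ p x y j, mul_zero]
    have : (∑ x, ∑ y, ∑ b, c i x * c y l * -(f p x b * f b y j))
          + (∑ x, ∑ y, ∑ b, c i x * c y l * (f x y b * f p b j))
          + (∑ x, ∑ y, ∑ b, c i x * c y l * -(f x b j * f p y b)) = 0 := by
      rw [← Finset.sum_add_distrib, ← Finset.sum_add_distrib]
      refine Finset.sum_eq_zero fun x _ => ?_
      rw [← Finset.sum_add_distrib, ← Finset.sum_add_distrib]
      exact Finset.sum_eq_zero fun y _ => hxy x y
    rw [this, mul_zero]
  · intro i j l m
    simp [bigBrTri]
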